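/- For all real parameters α > 0 and β > 0, the scalar map φ(t) = t / (1 + (βt)^α)^{1/α} is a bijection from [0,∞) onto the half-open interval [0, 1/β). -/

import Mathlib

/-- The scalar strain-limiting profile `φ(t) = t / (1 + (βt)^α)^{1/α}`. -/
noncomputable def slProfile (α β t : ℝ) : ℝ :=
  t / (1 + (β * t) ^ α) ^ (1 / α)

theorem stmt_9 (α β : ℝ) (hα : 0 < α) (hβ : 0 < β) :
    Set.BijOn (slProfile α β) (Set.Ici 0) (Set.Ico 0 (1 / β)) := by
  have hα' : α ≠ 0 := hα.ne'
  set g : ℝ → ℝ := fun s => s / (1 - (β * s) ^ α) ^ (1 / α) with hg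
  -- basic facts for t ≥ 0
  have hA : ∀ t : ℝ, 0 ≤ t → 0 < 1 + (β * t) ^ α := fun t ht => by
    have := Real.rpow_nonneg (mul_nonneg hβ.le ht) α
    linarith
  have hmapsF : Set.MapsTo (slProfile α β) (Set.Ici 0) (Set.Ico 0 (1 / β)) := by
    intro t ht
    simp only [Set.mem_Ici] at ht
    have hx : 0 ≤ β * t := mul_nonneg hβ.le ht
    have hA' := hA t ht
    have hAr : 0 < (1 + (β * t) ^ α) ^ (1 / α) := Real.rpow_pos_of_pos hA' _
    constructor
    · exact div_nonneg ht hAr.le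
    · rw [slProfile, div_lt_div_iff₀ hAr hβ, one_mul]
      have h1 : (β * t) ^ α < 1 + (β * t) ^ α := by linarith
      have h2 := Real.rpow_lt_rpow (Real.rpow_nonneg hx α) h1 (by positivity : (0:ℝ) < 1/α)
      rw [one_div, Real.rpow_rpow_inv hx hα'] at h2
      rw [← one_div] at h2
      calc t * β = β * t := mul_comm t β
        _ < (1 + (β * t) ^ α) ^ (1/α) := h2
  have hmapsG : Set.MapsTo g (Set.Ico 0 (1 / β)) (Set.Ici 0) := by
    intro s hs
    obtain ⟨hs0, hs1⟩ := hs
    have hx1 : β * s < 1 := by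
      rw [lt_div_iff₀ hβ] at hs1; linarith [mul_comm s β]
    have hB : 0 < 1 - (β * s) ^ α := by
      rcases eq_or_lt_of_le (mul_nonneg hβ.le hs0) with h | h
      · rw [← h, Real.zero_rpow hα']; norm_num
      · have := Real.rpow_lt_one (mul_nonneg hβ.le hs0) hx1 hα
        linarith
    exact div_nonneg hs0 (Real.rpow_nonneg hB.le _)
  have hleft : Set.LeftInvOn g (slProfile α β) (Set.Ici 0) := by -- g ∘ φ = id on Ici 0
    intro t ht
    simp only [Set.mem_Ici] at ht
    have hx : 0 ≤ β * t := mul_nonneg hβ.le ht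
    have hA' := hA t ht
    have hAr : 0 < (1 + (β * t) ^ α) ^ (1 / α) := Real.rpow_pos_of_pos hA' _
    have key : (β * slProfile α β t) ^ α = (β * t) ^ α / (1 + (β * t) ^ α) := by
      rw [slProfile, ← mul_div_assoc, Real.div_rpow hx hAr.le]
      congr 1
      rw [one_div, Real.rpow_inv_rpow hA'.le hα']
    have h1 : 1 - (β * slProfile α β t) ^ α = 1 / (1 + (β * t) ^ α) := by
      rw [key]; field_simp; ring
    show slProfile α β t / (1 - (β * slProfile α β t) ^ α) ^ (1 / α) = t
    rw [h1, Real.div_rpow zero_le_one hA'.le, Real.one_rpow, div_div_eq_mul_div, div_one, slProfile,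
      div_mul_cancel₀ _ hAr.ne']
  have hright : Set.RightInvOn g (slProfile α β) (Set.Ico 0 (1/β)) := by
    -- φ ∘ g = id on Ico 0 (1/β)
    intro s hs
    obtain ⟨hs0, hs1⟩ := hs
    have hx : 0 ≤ β * s := mul_nonneg hβ.le hs0
    have hx1 : β * s < 1 := by
      rw [lt_div_iff₀ hβ] at hs1; linarith [mul_comm s β]
    have hB : 0 < 1 - (β * s) ^ α := by
      rcases eq_or_lt_of_le hx with h | h
      · rw [← h, Real.zero_rpow hα']; norm_num
      · have := Real.rpow_lt_one hx hx1 hα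
        linarith
    have hBr : 0 < (1 - (β * s) ^ α) ^ (1 / α) := Real.rpow_pos_of_pos hB _
    have key : (β * g s) ^ α = (β * s) ^ α / (1 - (β * s) ^ α) := by
      rw [hg]; simp only
      rw [← mul_div_assoc, Real.div_rpow hx hBr.le]
      congr 1
      rw [one_div, Real.rpow_inv_rpow hB.le hα']
    have h1 : 1 + (β * g s) ^ α = 1 / (1 - (β * s) ^ α) := by
      rw [key]; field_simp; ring
    show g s / (1 + (β * g s) ^ α) ^ (1 / α) = s
    rw [h1, Real.div_rpow zero_le_one hB.le, Real.one_rpow, div_div_eq_mul_div, div_one, hg]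
    simp only
    rw [div_mul_cancel₀ _ hBr.ne']
  exact Set.InvOn.bijOn ⟨hleft, hright⟩ hmapsF hmapsG
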